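/- Let O be a category and G : O ⥤ Cat a functor such that for every object x of O the category G.obj x is a groupoid. Then every morphism of the Grothendieck construction Grothendieck G is strongly cocartesian with respect to the forgetful functor Grothendieck G ⥤ O. -/

import Mathlib

open CategoryTheory

universe v' u' v u

/-- Let `G : O ⥤ Cat` be a functor such that each category `G.obj x` is a
groupoid (i.e. all of its morphisms are isomorphisms). Then every morphism of the
Grothendieck construction `Grothendieck G` is strongly cocartesian with respect to the
forgetful functor `Grothendieck G ⥤ O`. -/
theorem statement3 {O : Type u} [Category.{v} O] (G : O ⥤ Cat.{v', u'})
    (hgpd : ∀ (x : O) {a b : G.obj x} (f : a ⟶ b), IsIso f)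
    {X Y : Grothendieck G} (φ : X ⟶ Y) :
    (Grothendieck.forget G).IsStronglyCocartesian ((Grothendieck.forget G).map φ) φ := by
  constructor
  intro Z g φ' hlift
  have hbase : φ'.base = φ.base ≫ g := by
    have := IsHomLift.fac' (Grothendieck.forget G)
      (((Grothendieck.forget G).map φ) ≫ g) φ'
    simp at this; exact this
  have := hgpd Y.base φ.fiber
  have hobj : (G.map g).toFunctor.obj ((G.map φ.base).toFunctor.obj X.fiber) = (G.map φ'.base).toFunctor.obj X.fiber := by
    rw [hbase]; exact congrArg (fun F => F.toFunctor.obj X.fiber) (G.map_comp φ.base g).symm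
  refine ⟨⟨g, (G.map g).toFunctor.map (@inv _ _ _ _ φ.fiber this) ≫ eqToHom hobj ≫ φ'.fiber⟩, ⟨?_, ?_⟩, ?_⟩
  · exact IsHomLift.of_fac' (Grothendieck.forget G) g _ rfl rfl (by simp)
  · apply Grothendieck.ext _ _ hbase.symm
    rw [Grothendieck.comp_fiber]
    dsimp
    have e : (G.map g).toFunctor.map φ.fiber ≫ (G.map g).toFunctor.map (@inv _ _ _ _ φ.fiber this) = 𝟙 _ :=
      ((G.map g).toFunctor.map_comp _ _).symm.trans ((congrArg _ (IsIso.hom_inv_id φ.fiber)).trans ((G.map g).toFunctor.map_id _))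
    refine (eqToHom_trans_assoc _ _ _).trans ?_
    refine (congrArg (eqToHom _ ≫ ·) ((reassoc_of% e) _)).trans ?_
    refine (eqToHom_trans_assoc _ _ _).trans ?_
    exact (congrArg (· ≫ φ'.fiber) (eqToHom_refl _ _)).trans (Category.id_comp _)
  · rintro ⟨χb, χf⟩ ⟨hl, hc⟩
    have hb : χb = g := by
      have := IsHomLift.fac' (Grothendieck.forget G) g (⟨χb, χf⟩ : Y ⟶ Z)
      simp at this; exact this
    subst hb
    apply Grothendieck.ext
    case w_base => rfl
    have hf := Grothendieck.congr hc
    rw [Grothendieck.comp_fiber] at hf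
    dsimp at hf ⊢
    erw [Category.id_comp, Functor.map_inv, IsIso.eq_inv_comp]
    replace hf := (eqToHom_comp_iff _ _ _).1 hf
    exact hf.trans (eqToHom_trans_assoc _ _ _)
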